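/- Let Ω be a finite set of size n and let H be a group of permutations of Ω generated by h₁, h₂, h₃ with h₁h₂h₃ equal to the identity permutation. For 1 ≤ i ≤ 3 let m_i be the number of cycles of h_i on Ω (counting fixed points as cycles of length 1, so m_i is the number of orbits of ⟨h_i⟩ on Ω). If H acts transitively on Ω, then m₁ + m₂ + m₃ ≤ n + 2, and moreover m₁ + m₂ + m₃ ≡ n (mod 2). -/

import Mathlib

/-- The number of cycles of a permutation `h` of a finite set `Ω`, counting fixed points as
cycles of length `1`: the number of orbits of the cyclic group `⟨h⟩` on `Ω`. -/
noncomputable def cycleCount {Ω : Type} [Fintype Ω] (h : Equiv.Perm Ω) : ℕ :=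
  Nat.card (MulAction.orbitRel.Quotient (Subgroup.zpowers h) Ω)

open Equiv Equiv.Perm MulAction Subgroup
set_option linter.unusedSectionVars false
set_option linter.unusedVariables false
section Aux
variable {Ω : Type} [Fintype Ω]


/-- Join of a setoid with one extra pair `(a,b)`. -/
def joinPair (r : Setoid Ω) (a b : Ω) : Setoid Ω where
  r x y := r x y ∨ (r x a ∧ r b y) ∨ (r x b ∧ r a y)
  iseqv := by
    constructor
    · intro x; exact Or.inl (r.refl x)
    · rintro x y (h | ⟨h1, h2⟩ | ⟨h1, h2⟩)
      · exact Or.inl (r.symm h)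
      · exact Or.inr (Or.inr ⟨r.symm h2, r.symm h1⟩)
      · exact Or.inr (Or.inl ⟨r.symm h2, r.symm h1⟩)
    · rintro x y z (h | ⟨h1, h2⟩ | ⟨h1, h2⟩) (h' | ⟨h1', h2'⟩ | ⟨h1', h2'⟩)
      · exact Or.inl (r.trans h h')
      · exact Or.inr (Or.inl ⟨r.trans h h1', h2'⟩)
      · exact Or.inr (Or.inr ⟨r.trans h h1', h2'⟩)
      · exact Or.inr (Or.inl ⟨h1, r.trans h2 h'⟩)
      · exact Or.inl (r.trans h1 (r.trans (r.symm (r.trans h2 h1')) h2'))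
      · exact Or.inl (r.trans h1 h2')
      · exact Or.inr (Or.inr ⟨h1, r.trans h2 h'⟩)
      · exact Or.inl (r.trans h1 h2')
      · exact Or.inl (r.trans h1 (r.trans (r.symm (r.trans h2 h1')) h2'))

lemma joinPair_apply (r : Setoid Ω) (a b x y : Ω) :
    joinPair r a b x y ↔ r x y ∨ (r x a ∧ r b y) ∨ (r x b ∧ r a y) := Iff.rfl


lemma card_quotient_eq_of_iff (r s : Setoid Ω) (h : ∀ x y, r x y ↔ s x y) :
    Nat.card (Quotient r) = Nat.card (Quotient s) := by
  have : r = s := Setoid.ext h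
  subst this; rfl

lemma card_quotient_merge (r s : Setoid Ω) (a b : Ω)
    (hrs : ∀ x y, r x y → s x y)
    (hsr : ∀ x y, s x y → r x y ∨ (r x a ∧ r b y) ∨ (r x b ∧ r a y))
    (hab : ¬ r a b) (hs : s a b) :
    Nat.card (Quotient s) + 1 = Nat.card (Quotient r) := by
  classical
  set φ : Quotient r → Quotient s := Quotient.map' id hrs with hφ
  have hφmk : ∀ x : Ω, φ (Quotient.mk'' x) = Quotient.mk'' x := fun x => rfl
  set B : Quotient r := Quotient.mk'' b with hB
  have hbij : Function.Bijective (fun q : {q : Quotient r // q ≠ B} => φ q.1) := by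
    constructor
    · rintro ⟨q1, hq1⟩ ⟨q2, hq2⟩ h
      revert hq1 hq2 h
      refine Quotient.inductionOn₂' q1 q2 ?_
      intro x y hq1 hq2 h
      simp only [hφmk] at h
      have hsxy : s x y := Quotient.eq''.mp h
      rcases hsr x y hsxy with h' | ⟨h1, h2⟩ | ⟨h1, h2⟩
      · exact Subtype.ext (Quotient.eq''.mpr h')
      · exact absurd (Quotient.eq''.mpr (r.symm h2)) hq2
      · exact absurd (Quotient.eq''.mpr h1) hq1
    · intro q
      refine Quotient.inductionOn' q ?_
      intro z
      by_cases hz : (Quotient.mk'' z : Quotient r) = B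
      · have hrzb : r z b := Quotient.eq''.mp hz
        refine ⟨⟨Quotient.mk'' a, fun h => hab (Quotient.eq''.mp h)⟩, ?_⟩
        show φ (Quotient.mk'' a) = Quotient.mk'' z
        rw [hφmk]
        exact Quotient.eq''.mpr (s.trans hs (s.symm (hrs _ _ hrzb)))
      · exact ⟨⟨Quotient.mk'' z, hz⟩, rfl⟩
  have h1 : Nat.card (Quotient s) = Nat.card {q : Quotient r // q ≠ B} :=
    (Nat.card_congr (Equiv.ofBijective _ hbij)).symm
  have h2 : Nat.card (Quotient r) = Nat.card {q : Quotient r // q = B} + Nat.card {q : Quotient r // q ≠ B} := by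
    rw [← Nat.card_sum]
    exact Nat.card_congr (Equiv.sumCompl (· = B)).symm
  have h3 : Nat.card {q : Quotient r // q = B} = 1 := by
    haveI : Unique {q : Quotient r // q = B} := ⟨⟨⟨B, rfl⟩⟩, fun q => Subtype.ext q.2⟩
    exact Nat.card_unique
  omega



noncomputable def oCount (G : Subgroup (Equiv.Perm Ω)) : ℕ :=
  Nat.card (Quotient (MulAction.orbitRel G Ω))

lemma cycleCount_eq_oCount (g : Perm Ω) : cycleCount g = oCount (zpowers g) := rfl

lemma orbitRel_apply' {G : Subgroup (Perm Ω)} {x y : Ω} :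
    orbitRel G Ω x y ↔ ∃ g ∈ G, g y = x := by
  constructor
  · rintro ⟨⟨g, hg⟩, rfl⟩
    exact ⟨g, hg, rfl⟩
  · rintro ⟨g, hg, h⟩
    exact ⟨⟨g, hg⟩, h⟩

lemma orbitRel_zpowers {g : Perm Ω} {x y : Ω} :
    orbitRel (zpowers g) Ω x y ↔ g.SameCycle y x := by
  rw [orbitRel_apply']
  constructor
  · rintro ⟨u, ⟨i, rfl⟩, h⟩
    exact ⟨i, h⟩
  · rintro ⟨i, h⟩
    exact ⟨g ^ i, ⟨i, rfl⟩, h⟩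

/-- closure control: if a setoid `R` relates `s x` to `x` for all generators, then the
orbit relation of the closure is contained in `R`. -/
lemma rel_of_orbitRel_closure {S : Set (Perm Ω)} (R : Setoid Ω)
    (hS : ∀ s ∈ S, ∀ x, R (s x) x) :
    ∀ x y, orbitRel (closure S) Ω x y → R x y := by
  have key : ∀ g ∈ closure S, ∀ x, R (g x) x := by
    intro g hg
    induction hg using closure_induction with
    | mem s hs => exact hS s hs
    | one => intro x; simpa using R.refl x
    | mul g h hg hh ihg ihh =>
        intro x
        have : (g * h) x = g (h x) := rfl
        rw [this]
        exact R.trans (ihg (h x)) (ihh x)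
    | inv g hg ih =>
        intro x
        have := ih (g⁻¹ x)
        rw [show g (g⁻¹ x) = x from g.apply_symm_apply x] at this
        exact R.symm this
  rintro x y ⟨⟨g, hg⟩, rfl⟩
  exact key g hg y

lemma sameCycle_subset {h : Perm Ω} (R : Setoid Ω) (hR : ∀ x, R (h x) x) :
    ∀ x y, h.SameCycle x y → R x y := by
  intro x y hxy
  have h1 : orbitRel (zpowers h) Ω y x := orbitRel_zpowers.mpr hxy
  rw [zpowers_eq_closure] at h1
  exact R.symm (rel_of_orbitRel_closure R (by simpa using hR) y x h1)

lemma orbitRel_mono {G H : Subgroup (Perm Ω)} (hGH : G ≤ H) {x y : Ω}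
    (h : orbitRel G Ω x y) : orbitRel H Ω x y := by
  rw [orbitRel_apply'] at h ⊢
  obtain ⟨g, hg, hgy⟩ := h
  exact ⟨g, hGH hg, hgy⟩

lemma cycleCount_le_card (g : Perm Ω) : cycleCount g ≤ Fintype.card Ω := by
  rw [cycleCount_eq_oCount, oCount, ← Nat.card_eq_fintype_card]
  exact Nat.card_le_card_of_surjective Quotient.mk''
    (fun q => Quotient.inductionOn' q fun x => ⟨x, rfl⟩)

lemma oCount_bot : oCount (⊥ : Subgroup (Perm Ω)) = Fintype.card Ω := by
  rw [oCount, ← Nat.card_eq_fintype_card]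
  refine Nat.card_congr (Equiv.ofBijective (Quotient.mk'' : Ω → _) ⟨?_, ?_⟩).symm
  · intro x y hxy
    have h := Quotient.eq''.mp hxy
    rw [orbitRel_apply'] at h
    obtain ⟨g, hg, hgy⟩ := h
    rw [Subgroup.mem_bot] at hg
    subst hg
    exact hgy.symm
  · intro q
    exact Quotient.inductionOn' q fun x => ⟨x, rfl⟩

lemma cycleCount_one : cycleCount (1 : Perm Ω) = Fintype.card Ω := by
  rw [cycleCount_eq_oCount]
  have : zpowers (1 : Perm Ω) = ⊥ := zpowers_one_eq_bot
  rw [this, oCount_bot]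

variable [DecidableEq Ω]


lemma swap_pow_eq {h : Perm Ω} {a b : Ω} (k : ℕ) (hk : 0 < k)
    (hj : ∀ j, 0 < j → j < k → (h ^ j) b ≠ a ∧ (h ^ j) b ≠ b) :
    ((h * Equiv.swap a b) ^ k) a = (h ^ k) b := by
  induction k with
  | zero => omega
  | succ n ih =>
    rcases Nat.eq_zero_or_pos n with rfl | hn
    · simp [Equiv.Perm.mul_apply]
    · have hih := ih hn (fun j h1 h2 => hj j h1 (by omega))
      have hnb := hj n hn (by omega)
      calc ((h * Equiv.swap a b) ^ (n + 1)) a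
          = (h * Equiv.swap a b) (((h * Equiv.swap a b) ^ n) a) := by
            rw [pow_succ', Equiv.Perm.mul_apply]
        _ = h (Equiv.swap a b ((h ^ n) b)) := by rw [hih, Equiv.Perm.mul_apply]
        _ = h ((h ^ n) b) := by rw [Equiv.swap_apply_of_ne_of_ne hnb.1 hnb.2]
        _ = (h ^ (n + 1)) b := by rw [pow_succ', Equiv.Perm.mul_apply]

lemma sameCycle_reduce {g : Perm Ω} {x y : Ω} {q : ℕ} (hq : 0 < q) (hx : (g ^ q) x = x)
    (h : g.SameCycle x y) : ∃ k < q, (g ^ k) x = y := by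
  obtain ⟨i, hi⟩ := h
  have hq' : (0 : ℤ) < q := by exact_mod_cast hq
  refine ⟨(i % q).toNat, ?_, ?_⟩
  · have := Int.emod_lt_of_pos i hq'
    omega
  · have hfix : ((g ^ (q : ℤ)) ^ (i / (q : ℤ))) x = x := by
      apply Equiv.Perm.zpow_apply_eq_self_of_apply_eq_self
      rw [zpow_natCast]; exact hx
    calc (g ^ (i % (q : ℤ)).toNat) x
        = (g ^ (i % (q : ℤ))) x := by
          rw [← zpow_natCast, Int.toNat_of_nonneg (Int.emod_nonneg i (by omega))]
      _ = (g ^ (i % (q : ℤ))) (((g ^ (q : ℤ)) ^ (i / (q : ℤ))) x) := by rw [hfix]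
      _ = (g ^ (i % (q : ℤ) + (q : ℤ) * (i / (q : ℤ)))) x := by
          rw [← zpow_mul, zpow_add, Equiv.Perm.mul_apply]
      _ = (g ^ i) x := by rw [Int.emod_add_mul_ediv]
      _ = y := hi

lemma sameCycle_mul_swap_of_not {h : Perm Ω} {a b : Ω} (hab : a ≠ b)
    (hn : ¬ h.SameCycle a b) : (h * Equiv.swap a b).SameCycle a b := by
  have hP : ∃ k, 0 < k ∧ (h ^ k) b = b :=
    ⟨orderOf h, orderOf_pos h, by rw [pow_orderOf_eq_one]; rfl⟩
  classical
  set m := Nat.find hP with hm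
  obtain ⟨hm0, hmfix⟩ := Nat.find_spec hP
  have hmin : ∀ j, 0 < j → j < m → (h ^ j) b ≠ a ∧ (h ^ j) b ≠ b := by
    intro j hj hjm
    constructor
    · intro e
      exact hn ⟨-(j : ℤ), by rw [← e, ← zpow_natCast, ← Equiv.Perm.mul_apply, ← zpow_add]; simp⟩
    · intro e
      exact Nat.find_min hP hjm ⟨hj, e⟩
  have := swap_pow_eq m hm0 hmin
  exact ⟨(m : ℤ), by rw [zpow_natCast, this, hmfix]⟩

lemma not_sameCycle_mul_swap_of {h : Perm Ω} {a b : Ω} (hab : a ≠ b)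
    (hc : h.SameCycle a b) : ¬ (h * Equiv.swap a b).SameCycle a b := by
  set g := h * Equiv.swap a b with hg
  have hP : ∃ k, 0 < k ∧ ((h ^ k) b = a ∨ (h ^ k) b = b) :=
    ⟨orderOf h, orderOf_pos h, Or.inr (by rw [pow_orderOf_eq_one]; rfl)⟩
  classical
  set q := Nat.find hP with hqdef
  obtain ⟨hq0, hqor⟩ := Nat.find_spec hP
  have hmin : ∀ j, 0 < j → j < q → (h ^ j) b ≠ a ∧ (h ^ j) b ≠ b := by
    intro j hj hjq
    constructor
    · intro e; exact Nat.find_min hP hjq ⟨hj, Or.inl e⟩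
    · intro e; exact Nat.find_min hP hjq ⟨hj, Or.inr e⟩
  have hgq : (g ^ q) a = (h ^ q) b := swap_pow_eq q hq0 hmin
  have hqa : (h ^ q) b = a := by
    rcases hqor with ha | hb'
    · exact ha
    · exfalso
      obtain ⟨k, hkq, hkeq⟩ := sameCycle_reduce hq0 hb' hc.symm
      rcases Nat.eq_zero_or_pos k with rfl | hk0
      · exact hab (by simpa using hkeq.symm)
      · exact Nat.find_min hP hkq ⟨hk0, Or.inl hkeq⟩
  have hfix : (g ^ q) a = a := hgq.trans hqa
  intro hs
  obtain ⟨k, hkq, hkeq⟩ := sameCycle_reduce hq0 hfix hs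
  rcases Nat.eq_zero_or_pos k with rfl | hk0
  · exact hab (by simpa using hkeq)
  · have := swap_pow_eq k hk0 (fun j h1 h2 => hmin j h1 (by omega))
    rw [← hg] at this
    rw [this] at hkeq
    exact (hmin k hk0 hkq).2 hkeq

end Aux
section Aux2
variable {Ω : Type} [Fintype Ω] [DecidableEq Ω]

noncomputable def cS (g : Perm Ω) : Setoid Ω :=
  ⟨Equiv.Perm.SameCycle g, Equiv.Perm.SameCycle.equivalence g⟩

lemma cS_apply {g : Perm Ω} {x y : Ω} : cS g x y ↔ g.SameCycle x y := Iff.rfl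

lemma cS_apply_self (g : Perm Ω) (x : Ω) : cS g (g x) x := ⟨-1, by simp⟩

lemma cycleCount_eq_cS (g : Perm Ω) : cycleCount g = Nat.card (Quotient (cS g)) := by
  rw [cycleCount_eq_oCount, oCount]
  apply card_quotient_eq_of_iff
  intro x y
  rw [orbitRel_zpowers, cS_apply, Equiv.Perm.sameCycle_comm]

/-- merge: multiplying by a swap of two points in different cycles decreases
the cycle count by one. -/
lemma cycleCount_mul_swap_merge {h : Perm Ω} {a b : Ω} (hab : a ≠ b)
    (hn : ¬ h.SameCycle a b) :
    cycleCount (h * Equiv.swap a b) + 1 = cycleCount h := by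
  set g := h * Equiv.swap a b with hg
  have hsc : g.SameCycle a b := sameCycle_mul_swap_of_not hab hn
  have hxab : ∀ x, x ≠ a → x ≠ b → g x = h x := fun x hxa hxb => by
    rw [hg, Equiv.Perm.mul_apply, Equiv.swap_apply_of_ne_of_ne hxa hxb]
  have hga : g a = h b := by rw [hg, Equiv.Perm.mul_apply, Equiv.swap_apply_left]
  have hgb : g b = h a := by rw [hg, Equiv.Perm.mul_apply, Equiv.swap_apply_right]
  rw [cycleCount_eq_cS, cycleCount_eq_cS]
  apply card_quotient_merge (cS h) (cS g) a b
  · -- SameCycle h ⊆ SameCycle g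
    apply sameCycle_subset (cS g)
    intro x
    rcases eq_or_ne x a with he | hxa
    · rw [he, ← hgb]
      exact (cS g).trans (cS_apply_self g b) ((cS g).symm hsc)
    rcases eq_or_ne x b with he | hxb
    · rw [he, ← hga]
      exact (cS g).trans (cS_apply_self g a) hsc
    · rw [← hxab x hxa hxb]
      exact cS_apply_self g x
  · -- SameCycle g ⊆ join
    apply sameCycle_subset (joinPair (cS h) a b)
    intro x
    rcases eq_or_ne x a with he | hxa
    · rw [he, hga]
      exact Or.inr (Or.inr ⟨cS_apply_self h b, (cS h).refl a⟩)
    rcases eq_or_ne x b with he | hxb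
    · rw [he, hgb]
      exact Or.inr (Or.inl ⟨cS_apply_self h a, (cS h).refl b⟩)
    · rw [hxab x hxa hxb]
      exact Or.inl (cS_apply_self h x)
  · exact hn
  · exact hsc

/-- split: multiplying by a swap of two points in the same cycle increases
the cycle count by one. -/
lemma cycleCount_mul_swap_split {h : Perm Ω} {a b : Ω} (hab : a ≠ b)
    (hc : h.SameCycle a b) :
    cycleCount (h * Equiv.swap a b) = cycleCount h + 1 := by
  have h2 : ¬ (h * Equiv.swap a b).SameCycle a b := not_sameCycle_mul_swap_of hab hc
  have h3 := cycleCount_mul_swap_merge hab h2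
  rw [mul_assoc, Equiv.swap_mul_self, mul_one] at h3
  omega

lemma oCount_insert_eq {S : Set (Perm Ω)} {a b : Ω}
    (hab' : orbitRel (closure S) Ω a b) :
    oCount (closure (insert (Equiv.swap a b) S)) = oCount (closure S) := by
  apply card_quotient_eq_of_iff
  intro x y
  constructor
  · apply rel_of_orbitRel_closure (orbitRel (closure S) Ω)
    intro s hs z
    rcases Set.mem_insert_iff.mp hs with he | hsS
    · rw [he]
      rcases eq_or_ne z a with hz | hza
      · rw [hz, Equiv.swap_apply_left]
        exact (orbitRel (closure S) Ω).symm hab'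
      rcases eq_or_ne z b with hz | hzb
      · rw [hz, Equiv.swap_apply_right]
        exact hab'
      · rw [Equiv.swap_apply_of_ne_of_ne hza hzb]
    · exact orbitRel_apply'.mpr ⟨s, subset_closure hsS, rfl⟩
  · intro hxy
    exact orbitRel_mono (closure_mono (Set.subset_insert _ _)) hxy

lemma oCount_insert_merge {S : Set (Perm Ω)} {a b : Ω} (hab : a ≠ b)
    (hn : ¬ orbitRel (closure S) Ω a b) :
    oCount (closure (insert (Equiv.swap a b) S)) + 1 = oCount (closure S) := by
  apply card_quotient_merge (orbitRel (closure S) Ω)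
    (orbitRel (closure (insert (Equiv.swap a b) S)) Ω) a b
  · intro x y hxy
    exact orbitRel_mono (closure_mono (Set.subset_insert _ _)) hxy
  · apply rel_of_orbitRel_closure (joinPair (orbitRel (closure S) Ω) a b)
    intro s hs z
    rcases Set.mem_insert_iff.mp hs with he | hsS
    · rw [he]
      rcases eq_or_ne z a with hz | hza
      · rw [hz, Equiv.swap_apply_left]
        exact Or.inr (Or.inr ⟨(orbitRel (closure S) Ω).refl b,
          (orbitRel (closure S) Ω).refl a⟩)
      rcases eq_or_ne z b with hz | hzb
      · rw [hz, Equiv.swap_apply_right]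
        exact Or.inr (Or.inl ⟨(orbitRel (closure S) Ω).refl a,
          (orbitRel (closure S) Ω).refl b⟩)
      · rw [Equiv.swap_apply_of_ne_of_ne hza hzb]
    · exact Or.inl (orbitRel_apply'.mpr ⟨s, subset_closure hsS, rfl⟩)
  · exact hn
  · exact orbitRel_apply'.mpr ⟨Equiv.swap a b,
      subset_closure (Set.mem_insert _ _), Equiv.swap_apply_right a b⟩

end Aux2
section Aux3
variable {Ω : Type} [Fintype Ω] [DecidableEq Ω]

lemma ree (l : List (Perm Ω)) : (∀ τ ∈ l, τ.IsSwap) →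
    Fintype.card Ω + cycleCount l.prod ≤ l.length + 2 * oCount (closure {x | x ∈ l}) ∧
    (cycleCount l.prod + l.length) % 2 = Fintype.card Ω % 2 := by
  induction l using List.reverseRecOn with
  | nil =>
      intro _
      have hset : {x | x ∈ ([] : List (Perm Ω))} = (∅ : Set (Perm Ω)) := by simp
      rw [List.prod_nil, List.length_nil, hset, Subgroup.closure_empty, oCount_bot, cycleCount_one]
      omega
  | append_singleton l' t ih =>
      intro hl
      obtain ⟨a, b, hab, rfl⟩ := hl t (by simp)
      have hl' : ∀ τ ∈ l', τ.IsSwap := fun τ hτ => hl τ (by simp [hτ])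
      obtain ⟨ih1, ih2⟩ := ih hl'
      have hset : {x | x ∈ l' ++ [Equiv.swap a b]} =
          insert (Equiv.swap a b) {x | x ∈ l'} := by
        ext x; simp [or_comm]
      have hprod : (l' ++ [Equiv.swap a b]).prod = l'.prod * Equiv.swap a b := by simp
      have hlen : (l' ++ [Equiv.swap a b]).length = l'.length + 1 := by simp
      have hmem : l'.prod ∈ closure {x | x ∈ l'} :=
        list_prod_mem (fun x hx => subset_closure hx)
      rw [hset, hprod, hlen]
      by_cases horb : orbitRel (closure {x | x ∈ l'}) Ω a b
      · have hoeq := oCount_insert_eq horb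
        rw [hoeq]
        by_cases hsc : l'.prod.SameCycle a b
        · have := cycleCount_mul_swap_split hab hsc
          omega
        · have := cycleCount_mul_swap_merge hab hsc
          omega
      · have hnsc : ¬ l'.prod.SameCycle a b := by
          intro hsc
          obtain ⟨i, hi⟩ := hsc.symm
          exact horb (orbitRel_apply'.mpr ⟨l'.prod ^ i, zpow_mem hmem i, hi⟩)
        have h1 := cycleCount_mul_swap_merge hab hnsc
        have h2 := oCount_insert_merge hab horb
        omega

lemma exists_swap_list (g : Perm Ω) :
    ∃ l : List (Perm Ω), (∀ τ ∈ l, τ.IsSwap) ∧ l.prod = g ∧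
      l.length + cycleCount g = Fintype.card Ω := by
  have key : ∀ m, ∀ g : Perm Ω, Fintype.card Ω - cycleCount g = m →
      ∃ l : List (Perm Ω), (∀ τ ∈ l, τ.IsSwap) ∧ l.prod = g ∧
        l.length + cycleCount g = Fintype.card Ω := by
    intro m
    induction m using Nat.strong_induction_on with
    | _ m ihm =>
      intro g hm
      by_cases hg1 : g = 1
      · refine ⟨[], by simp, by simp [hg1], ?_⟩
        simp [hg1, cycleCount_one]
      · have ha : ∃ a, g a ≠ a := by
          by_contra hcon
          push_neg at hcon
          exact hg1 (Equiv.ext fun x => by rw [hcon x]; rfl)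
        obtain ⟨a, ha⟩ := ha
        have hab : a ≠ g a := fun e => ha e.symm
        have hsc : g.SameCycle a (g a) := ⟨1, by simp⟩
        have hsplit := cycleCount_mul_swap_split hab hsc
        have hle : cycleCount (g * Equiv.swap a (g a)) ≤ Fintype.card Ω :=
          cycleCount_le_card _
        have hlt : Fintype.card Ω - cycleCount (g * Equiv.swap a (g a)) < m := by omega
        obtain ⟨l', hl's, hl'p, hl'len⟩ := ihm _ hlt (g * Equiv.swap a (g a)) rfl
        refine ⟨l' ++ [Equiv.swap a (g a)], ?_, ?_, ?_⟩
        · intro τ hτ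
          rcases List.mem_append.mp hτ with h | h
          · exact hl's τ h
          · rw [List.mem_singleton.mp h]
            exact ⟨a, g a, hab, rfl⟩
        · rw [List.prod_append, List.prod_singleton, hl'p, mul_assoc,
            Equiv.swap_mul_self, mul_one]
        · have : (l' ++ [Equiv.swap a (g a)]).length = l'.length + 1 := by simp
          omega
  exact key _ g rfl

end Aux3

/-- If a transitive group of permutations of a set of size `n` is generated by `h₁, h₂, h₃` with
`h₁h₂h₃ = 1`, and `h_i` has `m_i` cycles, then `m₁ + m₂ + m₃ ≤ n + 2` and
`m₁ + m₂ + m₃ ≡ n (mod 2)`. -/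
theorem cycleCount_bound_of_transitive (Ω : Type) [Fintype Ω] (n : ℕ) (hn : Fintype.card Ω = n)
    (h₁ h₂ h₃ : Equiv.Perm Ω) (hprod : h₁ * h₂ * h₃ = 1)
    (htrans : ∀ ω ω' : Ω, ∃ g ∈ Subgroup.closure ({h₁, h₂, h₃} : Set (Equiv.Perm Ω)), g ω = ω') :
    cycleCount h₁ + cycleCount h₂ + cycleCount h₃ ≤ n + 2 ∧
    (cycleCount h₁ + cycleCount h₂ + cycleCount h₃) % 2 = n % 2 := by
  classical
  obtain ⟨l₁, hs₁, hp₁, hlen₁⟩ := exists_swap_list h₁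
  obtain ⟨l₂, hs₂, hp₂, hlen₂⟩ := exists_swap_list h₂
  obtain ⟨l₃, hs₃, hp₃, hlen₃⟩ := exists_swap_list h₃
  set L := l₁ ++ (l₂ ++ l₃) with hL
  have hswap : ∀ τ ∈ L, τ.IsSwap := by
    intro τ hτ
    rw [hL] at hτ
    rcases List.mem_append.mp hτ with h | h
    · exact hs₁ τ h
    rcases List.mem_append.mp h with h | h
    · exact hs₂ τ h
    · exact hs₃ τ h
  have hLprod : L.prod = 1 := by
    rw [hL, List.prod_append, List.prod_append, hp₁, hp₂, hp₃, ← mul_assoc, hprod]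
  have hmemL : ∀ x ∈ L, x ∈ Subgroup.closure {x | x ∈ L} :=
    fun x hx => Subgroup.subset_closure hx
  have h1mem : h₁ ∈ Subgroup.closure {x | x ∈ L} := by
    rw [← hp₁]
    exact Subgroup.list_prod_mem _ (fun x hx => hmemL x (by rw [hL]; exact List.mem_append_left _ hx))
  have h2mem : h₂ ∈ Subgroup.closure {x | x ∈ L} := by
    rw [← hp₂]
    exact Subgroup.list_prod_mem _ (fun x hx => hmemL x
      (by rw [hL]; exact List.mem_append_right _ (List.mem_append_left _ hx)))
  have h3mem : h₃ ∈ Subgroup.closure {x | x ∈ L} := by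
    rw [← hp₃]
    exact Subgroup.list_prod_mem _ (fun x hx => hmemL x
      (by rw [hL]; exact List.mem_append_right _ (List.mem_append_right _ hx)))
  have hle : Subgroup.closure ({h₁, h₂, h₃} : Set (Equiv.Perm Ω)) ≤
      Subgroup.closure {x | x ∈ L} := by
    rw [Subgroup.closure_le]
    intro x hx
    rcases hx with rfl | hx
    · exact h1mem
    rcases hx with rfl | hx
    · exact h2mem
    · rw [Set.mem_singleton_iff.mp hx]
      exact h3mem
  have htriv : oCount (Subgroup.closure {x | x ∈ L}) ≤ 1 := by
    rw [oCount]
    have hsub : Subsingleton (Quotient (MulAction.orbitRel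
        (Subgroup.closure {x | x ∈ L}) Ω)) := by
      constructor
      intro q1 q2
      refine Quotient.inductionOn₂' q1 q2 ?_
      intro x y
      apply Quotient.sound'
      obtain ⟨g, hg, hgy⟩ := htrans y x
      exact orbitRel_apply'.mpr ⟨g, hle hg, hgy⟩
    rcases isEmpty_or_nonempty (Quotient (MulAction.orbitRel
        (Subgroup.closure {x | x ∈ L}) Ω)) with he | hne
    · rw [Nat.card_of_isEmpty]; omega
    · obtain ⟨q⟩ := hne
      haveI : Unique (Quotient (MulAction.orbitRel (Subgroup.closure {x | x ∈ L}) Ω)) :=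
        ⟨⟨q⟩, fun x => Subsingleton.elim x q⟩
      rw [Nat.card_unique]
  obtain ⟨hree, hpar⟩ := ree L hswap
  rw [hLprod, cycleCount_one] at hree hpar
  have hlenL : L.length = l₁.length + (l₂.length + l₃.length) := by
    rw [hL, List.length_append, List.length_append]
  rw [hn] at hree hpar hlen₁ hlen₂ hlen₃
  set o := oCount (Subgroup.closure {x | x ∈ L}) with ho
  constructor <;> omega
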